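/- For any positive integers g and r, and any integers s₁, …, s_r ≥ 2, there exists a nonempty finite set V and a finite indexed family (E_t)_{t∈T} of subsets of V such that: (1) every vertex v ∈ V belongs to exactly r of the sets E_t, and the multiset of sizes of the sets containing v is exactly {s₁, …, s_r}; and (2) the hypergraph has girth at least g, i.e. there do not exist an integer k with 2 ≤ k < g, distinct vertices x₀, …, x_{k−1} ∈ V, and distinct indices t₀, …, t_{k−1} ∈ T such that {x_j, x_{(j+1 mod k)}} ⊆ E_{t_j} for every 0 ≤ j ≤ k−1. -/

import Mathlib

open Pointwise

namespace BergeGirth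

variable (g r : ℕ) (s : Fin r → ℕ)

/-- Validity predicate for reduced words: length at most `g`, adjacent syllables have
distinct colors, and every exponent `m` satisfies `1 ≤ m < s i`. -/
def Valid (l : List (Fin r × ℕ)) : Prop :=
  l.length ≤ g ∧ l.Chain' (fun a b => a.1 ≠ b.1) ∧ ∀ p ∈ l, 1 ≤ p.2 ∧ p.2 < s p.1

/-- The "head color differs from `i`" predicate (vacuously true for `[]`). -/
def HeadNe (i : Fin r) (l : List (Fin r × ℕ)) : Prop :=
  ∀ p ∈ l.head?, p.1 ≠ i

/-- One application of the generator of color `i` to a reduced word. -/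
def step (i : Fin r) (l : List (Fin r × ℕ)) : List (Fin r × ℕ) :=
  match l with
  | [] => if 0 < g then [(i, 1)] else []
  | (j, m) :: u =>
      if j = i then (if m + 1 < s i then (i, m + 1) :: u else u)
      else (if ((j, m) :: u : List _).length < g then (i, 1) :: (j, m) :: u else (j, m) :: u)

lemma step_push {i : Fin r} {l : List (Fin r × ℕ)} (hd : HeadNe r i l)
    (hlen : l.length < g) : step g r s i l = (i, 1) :: l := by
  cases l with
  | nil => simp [step]; omega
  | cons p u =>
      obtain ⟨j, m⟩ := p
      have : j ≠ i := hd (j, m) (by simp)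
      simp only [step, if_neg this, List.length_cons]
      rw [if_pos (by simpa using hlen)]

lemma step_inc {i : Fin r} {m : ℕ} {u : List (Fin r × ℕ)} (h : m + 1 < s i) :
    step g r s i ((i, m) :: u) = (i, m + 1) :: u := by
  simp [step, h]

lemma step_pop {i : Fin r} {m : ℕ} {u : List (Fin r × ℕ)} (h : ¬ m + 1 < s i) :
    step g r s i ((i, m) :: u) = u := by
  simp [step, h]

lemma step_stuck {i : Fin r} {l : List (Fin r × ℕ)} (hd : HeadNe r i l)
    (hlen : ¬ l.length < g) : step g r s i l = l := by
  cases l with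
  | nil => simp at hlen; simp [step]; omega
  | cons p u =>
      obtain ⟨j, m⟩ := p
      have : j ≠ i := hd (j, m) (by simp)
      simp only [step, if_neg this, List.length_cons]
      rw [if_neg (by simpa using hlen)]

lemma step_build {i : Fin r} {l : List (Fin r × ℕ)} (hd : HeadNe r i l)
    (hlen : l.length < g) :
    ∀ m, 1 ≤ m → m < s i → (step g r s i)^[m] l = (i, m) :: l := by
  intro m h1 h2
  induction m with
  | zero => omega
  | succ n ih =>
      rcases Nat.eq_or_lt_of_le h1 with h | h
      · simp [← h, step_push g r s hd hlen]
      · have hn1 : 1 ≤ n := by omega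
        have hns : n < s i := by omega
        rw [Function.iterate_succ_apply', ih hn1 hns, step_inc g r s (by omega)]

lemma step_cycle {i : Fin r} {l : List (Fin r × ℕ)} (hd : HeadNe r i l)
    (hlen : l.length ≤ g) (hsi : 2 ≤ s i) : (step g r s i)^[s i] l = l := by
  rcases lt_or_ge l.length g with h | h
  · have hs1 : (step g r s i)^[s i - 1] l = (i, s i - 1) :: l :=
      step_build g r s hd h (s i - 1) (by omega) (by omega)
    have : s i = (s i - 1) + 1 := by omega
    rw [this, Function.iterate_succ_apply', hs1, step_pop g r s (by omega)]
  · have hfix : step g r s i l = l := step_stuck g r s hd (by omega)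
    exact Function.iterate_fixed hfix (s i)

lemma valid_tail {p : Fin r × ℕ} {u : List (Fin r × ℕ)} (h : Valid g r s (p :: u)) :
    Valid g r s u := by
  obtain ⟨h1, h2, h3⟩ := h
  exact ⟨by simp at h1 ⊢; omega, h2.tail, fun q hq => h3 q (by simp [hq])⟩

lemma headNe_of_valid_cons {q : Fin r × ℕ} {u : List (Fin r × ℕ)}
    (h : Valid g r s (q :: u)) : HeadNe r q.1 u := by
  intro p hp
  obtain ⟨h1, h2, h3⟩ := h
  cases u with
  | nil => simp at hp
  | cons q' v =>
      simp at hp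
      subst hp
      exact (List.isChain_cons_cons.mp h2).1.symm

lemma step_orbit {i : Fin r} {l : List (Fin r × ℕ)} (hv : Valid g r s l)
    (hsi : 2 ≤ s i) : (step g r s i)^[s i] l = l := by
  cases l with
  | nil => exact step_cycle g r s (by intro p hp; simp at hp) hv.1 hsi
  | cons p u =>
      obtain ⟨j, m⟩ := p
      by_cases hj : j = i
      · subst hj
        have hd : HeadNe r j u := headNe_of_valid_cons g r s (q := (j, m)) hv
        have hlen : u.length < g := by have := hv.1; simp at this; omega
        have hm : 1 ≤ m ∧ m < s j := hv.2.2 (j, m) (by simp)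
        have heq : (step g r s j)^[m] u = (j, m) :: u :=
          step_build g r s hd hlen m hm.1 hm.2
        have hu : (step g r s j)^[s j] u = u := step_cycle g r s hd (by omega) hsi
        calc (step g r s j)^[s j] ((j, m) :: u)
            = (step g r s j)^[s j] ((step g r s j)^[m] u) := by rw [heq]
          _ = (step g r s j)^[m] ((step g r s j)^[s j] u) := by
              rw [← Function.iterate_add_apply, ← Function.iterate_add_apply,
                Nat.add_comm]
          _ = (j, m) :: u := by rw [hu, heq]
      · exact step_cycle g r s (by intro p hp; simp at hp; subst hp; exact hj) hv.1 hsi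

lemma valid_step {i : Fin r} {l : List (Fin r × ℕ)} (hsi : 2 ≤ s i)
    (hv : Valid g r s l) : Valid g r s (step g r s i l) := by
  obtain ⟨h1, h2, h3⟩ := hv
  cases l with
  | nil =>
      by_cases hg : 0 < g
      · simp only [step, if_pos hg]
        refine ⟨by simpa, List.isChain_singleton _, ?_⟩
        intro p hp; simp at hp; subst hp; exact ⟨by simp, by have := hsi; simpa using (by omega : 1 < s i)⟩
      · simp only [step, if_neg hg]
        exact ⟨h1, h2, h3⟩
  | cons p u =>
      obtain ⟨j, m⟩ := p
      by_cases hj : j = i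
      · subst hj
        by_cases hm : m + 1 < s j
        · rw [step_inc g r s hm]
          refine ⟨by simpa using h1, ?_, ?_⟩
          · cases u with
            | nil => exact List.isChain_singleton _
            | cons q v =>
                simp only [List.Chain', List.isChain_cons_cons] at h2 ⊢
                exact ⟨h2.1, h2.2⟩
          · intro p hp
            rcases List.mem_cons.mp hp with h | h
            · subst h; exact ⟨by omega, hm⟩
            · exact h3 p (by simp [h])
        · rw [step_pop g r s hm]
          exact ⟨by simp at h1 ⊢; omega, h2.tail, fun q hq => h3 q (by simp [hq])⟩
      · by_cases hlen : ((j, m) :: u : List _).length < g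
        · have hd : HeadNe r i ((j, m) :: u) := by
            intro p hp; simp at hp; subst hp; exact hj
          rw [step_push g r s hd hlen]
          refine ⟨by simp at hlen ⊢; omega, ?_, ?_⟩
          · simp only [List.Chain', List.isChain_cons_cons]
            exact ⟨by simpa using fun h => hj h.symm, h2⟩
          · intro p hp
            rcases List.mem_cons.mp hp with h | h
            · subst h; exact ⟨by simp, by simp; omega⟩
            · exact h3 p h
        · have hd : HeadNe r i ((j, m) :: u) := by
            intro p hp; simp at hp; subst hp; exact hj
          rw [step_stuck g r s hd hlen]
          exact ⟨h1, h2, h3⟩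

/-- The set of reduced words. -/
def X := {l : List (Fin r × ℕ) // Valid g r s l}

instance : Finite (X g r s) := by
  set M := Finset.univ.sup s with hM
  have hbound : ∀ (x : X g r s) (p : Fin r × ℕ), p ∈ x.val → p.2 ≤ M := by
    intro x p hp
    have := x.2.2.2 p hp
    have hle : s p.1 ≤ M := Finset.le_sup (Finset.mem_univ p.1)
    omega
  apply Finite.of_injective (fun (x : X g r s) (j : Fin g) =>
    (x.val[(j : ℕ)]?).map (fun p => (p.1, (⟨min p.2 M, Nat.lt_succ_of_le (min_le_right _ _)⟩
      : Fin (M + 1)))))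
  intro a b hab
  apply Subtype.ext
  apply List.ext_getElem?
  intro n
  by_cases hn : n < g
  · have h := congrFun hab ⟨n, hn⟩
    simp only at h
    cases ha : a.val[n]? with
    | none =>
        cases hb : b.val[n]? with
        | none => rfl
        | some q => rw [ha, hb] at h; simp at h
    | some p =>
        cases hb : b.val[n]? with
        | none => rw [ha, hb] at h; simp at h
        | some q =>
            rw [ha, hb] at h
            simp only [Option.map_some] at h
            have hp := hbound a p (List.mem_of_getElem? ha)
            have hq := hbound b q (List.mem_of_getElem? hb)
            have h1 : p.1 = q.1 := (Prod.ext_iff.mp (Option.some_injective _ h)).1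
            have h2 : (⟨min p.2 M, _⟩ : Fin (M+1)) = ⟨min q.2 M, _⟩ :=
              (Prod.ext_iff.mp (Option.some_injective _ h)).2
            have h2' : min p.2 M = min q.2 M := congrArg Fin.val h2
            rw [Nat.min_eq_left hp, Nat.min_eq_left hq] at h2'
            exact congrArg some (Prod.ext h1 h2')
  · have ha : a.val[n]? = none := List.getElem?_eq_none_iff.mpr (le_trans a.2.1 (by omega))
    have hb : b.val[n]? = none := List.getElem?_eq_none_iff.mpr (le_trans b.2.1 (by omega))
    rw [ha, hb]

variable (hs : ∀ i, 2 ≤ s i)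

/-- The step function as a self-map of `X`. -/
def F (i : Fin r) : X g r s → X g r s :=
  fun x => ⟨step g r s i x.1, valid_step g r s (hs i) x.2⟩

lemma F_iter (i : Fin r) (n : ℕ) (x : X g r s) :
    ((F g r s hs i)^[n] x).val = (step g r s i)^[n] x.val := by
  induction n with
  | zero => rfl
  | succ n ih =>
      rw [Function.iterate_succ_apply', Function.iterate_succ_apply']
      show step g r s i ((F g r s hs i)^[n] x).val = _
      rw [ih]

lemma F_orbit (i : Fin r) (x : X g r s) : (F g r s hs i)^[s i] x = x := by
  apply Subtype.ext
  rw [F_iter]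
  exact step_orbit g r s x.2 (hs i)

/-- The generator of color `i` as a permutation of `X`. -/
def sigma (i : Fin r) : Equiv.Perm (X g r s) where
  toFun := F g r s hs i
  invFun := (F g r s hs i)^[s i - 1]
  left_inv := fun x => by
    have h1 : (F g r s hs i)^[s i - 1 + 1] x
        = (F g r s hs i)^[s i - 1] ((F g r s hs i)^[1] x) :=
      Function.iterate_add_apply _ _ _ _
    simp only [Function.iterate_one] at h1
    rw [← h1, (by have := hs i; omega : s i - 1 + 1 = s i), F_orbit]
  right_inv := fun x => by
    have h1 : (F g r s hs i)^[1 + (s i - 1)] x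
        = (F g r s hs i)^[1] ((F g r s hs i)^[s i - 1] x) :=
      Function.iterate_add_apply _ _ _ _
    simp only [Function.iterate_one] at h1
    rw [show F g r s hs i ((F g r s hs i)^[s i - 1] x)
        = (F g r s hs i)^[1 + (s i - 1)] x from h1.symm,
      (by have := hs i; omega : 1 + (s i - 1) = s i), F_orbit]

lemma sigma_pow_coe (i : Fin r) (n : ℕ) :
    ⇑(sigma g r s hs i ^ n) = (F g r s hs i)^[n] := by
  rw [← Equiv.Perm.iterate_eq_pow]
  rfl

lemma sigma_pow_val (i : Fin r) (n : ℕ) (x : X g r s) :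
    ((sigma g r s hs i ^ n) x).val = (step g r s i)^[n] x.val := by
  rw [sigma_pow_coe, F_iter]

lemma sigma_pow_s (i : Fin r) : sigma g r s hs i ^ (s i) = 1 := by
  apply Equiv.ext
  intro x
  have := F_orbit g r s hs i x
  rw [← sigma_pow_coe] at this
  simpa using this

/-- The empty word. -/
def eps : X g r s := ⟨[], by refine ⟨by simp, List.isChain_nil, by simp⟩⟩

lemma sigma_pow_apply_eps (hg : 1 ≤ g) (i : Fin r) (m : ℕ) (h1 : 1 ≤ m) (h2 : m < s i) :
    ((sigma g r s hs i ^ m) (eps g r s)).val = [(i, m)] := by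
  rw [sigma_pow_val]
  show (step g r s i)^[m] [] = _
  rw [step_build g r s (by intro p hp; simp at hp) (by simp; omega) m h1 h2]

lemma orderOf_sigma (hg : 1 ≤ g) (i : Fin r) : orderOf (sigma g r s hs i) = s i := by
  rw [orderOf_eq_iff (by have := hs i; omega)]
  refine ⟨sigma_pow_s g r s hs i, ?_⟩
  intro m hm hm0 h
  have := sigma_pow_apply_eps g r s hs hg i m hm0 hm
  rw [h] at this
  exact (List.cons_ne_nil _ _) this.symm

lemma word_eval (hg : 1 ≤ g) (L : List (Fin r × ℕ)) (hv : Valid g r s L) :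
    ((L.map (fun p => sigma g r s hs p.1 ^ p.2)).prod) (eps g r s) = ⟨L, hv⟩ := by
  induction L with
  | nil => simp [eps]; rfl
  | cons p u ih =>
      have hu : Valid g r s u := valid_tail g r s hv
      rw [List.map_cons, List.prod_cons, Equiv.Perm.mul_apply, ih hu]
      apply Subtype.ext
      refine (sigma_pow_val g r s hs p.1 p.2 ⟨u, hu⟩).trans ?_
      show (step g r s p.1)^[p.2] u = p :: u
      have hd : HeadNe r p.1 u := headNe_of_valid_cons g r s hv
      have hlen : u.length < g := by have := hv.1; simp at this; omega
      have hm : 1 ≤ p.2 ∧ p.2 < s p.1 := hv.2.2 p (by simp)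
      rw [step_build g r s hd hlen p.2 hm.1 hm.2]

/-- The vertex set: all permutations of the set of reduced words. -/
abbrev V : Type := Equiv.Perm (X g r s)

/-- The index set of hyperedges: pairs of a color `i` and a left coset of `⟨σᵢ⟩`. -/
abbrev T : Type := (i : Fin r) × (V g r s ⧸ Subgroup.zpowers (sigma g r s hs i))

/-- The hyperedge indexed by `⟨i, q⟩` is the coset `q` of `⟨σᵢ⟩`, as a finset. -/
noncomputable def E (t : T g r s hs) : Finset (V g r s) :=
  (Set.toFinite {v : V g r s |
    (QuotientGroup.mk v : V g r s ⧸ Subgroup.zpowers (sigma g r s hs t.1)) = t.2}).toFinset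

lemma mem_E (t : T g r s hs) (v : V g r s) :
    v ∈ E g r s hs t ↔
      (QuotientGroup.mk v : V g r s ⧸ Subgroup.zpowers (sigma g r s hs t.1)) = t.2 :=
  Set.Finite.mem_toFinset _

lemma card_E (hg : 1 ≤ g) (i : Fin r) (q : V g r s ⧸ Subgroup.zpowers (sigma g r s hs i)) :
    (E g r s hs ⟨i, q⟩).card = s i := by
  obtain ⟨v, rfl⟩ := QuotientGroup.mk_surjective q
  have hset : {w : V g r s | (QuotientGroup.mk w : V g r s ⧸ Subgroup.zpowers
      (sigma g r s hs i)) = QuotientGroup.mk v}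
      = v • (Subgroup.zpowers (sigma g r s hs i) : Set (V g r s)) := by
    ext w
    rw [Set.mem_smul_set_iff_inv_smul_mem, Set.mem_setOf_eq, smul_eq_mul]
    constructor
    · intro h
      have h' := QuotientGroup.eq.mp h
      simpa [mul_inv_rev] using Subgroup.inv_mem _ h'
    · intro h
      apply QuotientGroup.eq.mpr
      simpa [mul_inv_rev] using Subgroup.inv_mem _ h
  calc (E g r s hs ⟨i, QuotientGroup.mk v⟩).card
      = ({w : V g r s | (QuotientGroup.mk w : V g r s ⧸ Subgroup.zpowers
          (sigma g r s hs i)) = QuotientGroup.mk v}).ncard := by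
        rw [← Set.ncard_coe_finset]
        congr 1
        exact Set.Finite.coe_toFinset _
    _ = (v • (Subgroup.zpowers (sigma g r s hs i) : Set (V g r s))).ncard := by rw [hset]
    _ = ((Subgroup.zpowers (sigma g r s hs i) : Set (V g r s))).ncard :=
        Set.ncard_smul_set _ _
    _ = Nat.card (Subgroup.zpowers (sigma g r s hs i)) := (Nat.card_coe_set_eq _).symm
    _ = orderOf (sigma g r s hs i) := Nat.card_zpowers _
    _ = s i := orderOf_sigma g r s hs hg i

lemma degree_E (hg : 1 ≤ g) (v : V g r s) :
    ∃ e : Fin r ≃ {t : T g r s hs // v ∈ E g r s hs t},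
      ∀ i : Fin r, (E g r s hs (e i).1).card = s i := by
  refine ⟨Equiv.ofBijective
    (fun i => ⟨⟨i, QuotientGroup.mk v⟩, (mem_E g r s hs _ _).mpr rfl⟩) ⟨?_, ?_⟩, ?_⟩
  · intro i i' h
    exact congrArg (fun t => t.1.1) h
  · rintro ⟨⟨i, q⟩, h⟩
    refine ⟨i, ?_⟩
    apply Subtype.ext
    have hq : (QuotientGroup.mk v : V g r s ⧸ Subgroup.zpowers (sigma g r s hs i)) = q :=
      (mem_E g r s hs ⟨i, q⟩ v).mp h
    exact congrArg (Sigma.mk i) hq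
  · intro i
    exact card_E g r s hs hg i (QuotientGroup.mk v)

end BergeGirth

set_option maxHeartbeats 1000000 in
theorem exists_regular_hypergraph_of_large_girth
    (g r : ℕ) (hg : 1 ≤ g) (hr : 1 ≤ r) (s : Fin r → ℕ) (hs : ∀ i, 2 ≤ s i) :
    ∃ (V T : Type) (E : T → Finset V), Finite V ∧ Nonempty V ∧ Finite T ∧
      (∀ v : V, ∃ e : Fin r ≃ {t : T // v ∈ E t}, ∀ i : Fin r, (E (e i).1).card = s i) ∧
      ¬∃ (k : ℕ), 2 ≤ k ∧ k < g ∧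
        ∃ (x : Fin k → V) (t : Fin k → T), Function.Injective x ∧ Function.Injective t ∧
          ∀ j : Fin k, x j ∈ E (t j) ∧ x (finRotate k j) ∈ E (t j) := by
  classical
  refine ⟨BergeGirth.V g r s, BergeGirth.T g r s hs, BergeGirth.E g r s hs,
    inferInstance, ⟨1⟩, inferInstance, BergeGirth.degree_E g r s hs hg, ?_⟩
  rintro ⟨k, hk2, hkg, x, t, hxinj, htinj, hcyc⟩
  have hk0 : 0 < k := by omega
  have hrotval : ∀ j : Fin k, (finRotate k j).val = (j.val + 1) % k := by
    intro j
    rcases k with _ | k'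
    · exact absurd j.isLt (by omega)
    · rw [finRotate_succ_apply, Fin.val_add, Fin.val_one']
      rw [Nat.add_mod j.val 1 (k' + 1), Nat.mod_eq_of_lt j.isLt]
  have hne : ∀ j : Fin k, finRotate k j ≠ j := by
    intro j h
    have hv := congrArg Fin.val h
    rw [hrotval j] at hv
    have hj := j.isLt
    rcases Nat.lt_or_ge (j.val + 1) k with h' | h'
    · rw [Nat.mod_eq_of_lt h'] at hv; omega
    · have hk : j.val + 1 = k := by omega
      rw [hk, Nat.mod_self] at hv
      omega
  set c : Fin k → Fin r := fun j => (t j).1 with hc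
  have hmem2 : ∀ j : Fin k,
      (QuotientGroup.mk (x j) :
        BergeGirth.V g r s ⧸ Subgroup.zpowers (BergeGirth.sigma g r s hs (c j))) = (t j).2 ∧
      (QuotientGroup.mk (x (finRotate k j)) :
        BergeGirth.V g r s ⧸ Subgroup.zpowers (BergeGirth.sigma g r s hs (c j))) = (t j).2 :=
    fun j => ⟨(BergeGirth.mem_E g r s hs (t j) (x j)).mp (hcyc j).1,
      (BergeGirth.mem_E g r s hs (t j) (x (finRotate k j))).mp (hcyc j).2⟩
  have key : ∀ (a b : BergeGirth.T g r s hs), a.1 = b.1 → ∀ w : BergeGirth.V g r s,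
      a.2 = QuotientGroup.mk w → b.2 = QuotientGroup.mk w → a = b := by
    rintro ⟨c1, q1⟩ ⟨c2, q2⟩ h w
    dsimp at h
    subst h
    rintro h1 h2
    dsimp at h1 h2
    rw [h1, h2]
  have hcol : ∀ j, c (finRotate k j) ≠ c j := by
    intro j h
    apply hne j
    apply htinj
    exact key (t (finRotate k j)) (t j) h (x (finRotate k j))
      (hmem2 (finRotate k j)).1.symm (hmem2 j).2.symm
  have hrel : ∀ j : Fin k, ∃ m : ℕ, 1 ≤ m ∧ m < s (c j) ∧
      x (finRotate k j) = x j * BergeGirth.sigma g r s hs (c j) ^ m := by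
    intro j
    have hq : (QuotientGroup.mk (x j) :
        BergeGirth.V g r s ⧸ Subgroup.zpowers (BergeGirth.sigma g r s hs (c j)))
        = QuotientGroup.mk (x (finRotate k j)) := (hmem2 j).1.trans (hmem2 j).2.symm
    have hz : (x j)⁻¹ * x (finRotate k j)
        ∈ Subgroup.zpowers (BergeGirth.sigma g r s hs (c j)) := QuotientGroup.eq.mp hq
    have hz' : (x j)⁻¹ * x (finRotate k j)
        ∈ Submonoid.powers (BergeGirth.sigma g r s hs (c j)) :=
      mem_powers_iff_mem_zpowers.mpr hz
    rw [Submonoid.mem_powers_iff] at hz'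
    obtain ⟨n, hn⟩ := hz'
    have hpow : BergeGirth.sigma g r s hs (c j) ^ (n % s (c j))
        = BergeGirth.sigma g r s hs (c j) ^ n := by
      rw [← BergeGirth.orderOf_sigma g r s hs hg (c j)]
      exact pow_mod_orderOf _ _
    have hm0 : n % s (c j) ≠ 0 := by
      intro h0
      rw [h0, pow_zero] at hpow
      have hxx : x (finRotate k j) = x j := by
        have h1 : (x j)⁻¹ * x (finRotate k j) = 1 := by rw [← hn, ← hpow]
        have h2 := mul_eq_one_iff_inv_eq.mp h1
        rw [inv_inv] at h2
        exact h2.symm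
      exact hne j (hxinj hxx)
    refine ⟨n % s (c j), by omega, Nat.mod_lt _ (by have := hs (c j); omega), ?_⟩
    rw [hpow, hn, mul_inv_cancel_left]
  choose m hm1 hm2 hm3 using hrel
  set fm : ℕ → Fin k := fun n => ⟨n % k, Nat.mod_lt _ hk0⟩ with hfm
  set φ : ℕ → BergeGirth.V g r s :=
    fun n => BergeGirth.sigma g r s hs (c (fm n)) ^ (m (fm n)) with hφ
  set y : ℕ → BergeGirth.V g r s := fun n => x (fm n) with hy
  have hfmrot : ∀ n : ℕ, finRotate k (fm n) = fm (n + 1) := by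
    intro n
    apply Fin.ext
    rw [hrotval]
    show ((n % k) + 1) % k = (n + 1) % k
    rw [Nat.add_mod n 1 k, Nat.mod_eq_of_lt (show 1 < k by omega)]
  have hstep : ∀ n, y (n + 1) = y n * φ n := by
    intro n
    have h := hm3 (fm n)
    rw [hfmrot n] at h
    exact h
  set P : ℕ → BergeGirth.V g r s := fun n => ((List.range n).map φ).prod with hP
  have hind : ∀ n, y n = y 0 * P n := by
    intro n
    induction n with
    | zero => simp [hP]
    | succ n ih =>
        rw [hstep n, ih]
        show _ = y 0 * ((List.range (n + 1)).map φ).prod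
        rw [List.prod_range_succ, mul_assoc]
  have hy0 : y k = y 0 := by
    show x (fm k) = x (fm 0)
    congr 1
    apply Fin.ext
    show k % k = 0 % k
    simp
  have hP1 : P k = 1 := by
    have h := hind k
    rw [hy0] at h
    exact (left_eq_mul.mp h)
  set L : List (Fin r × ℕ) := (List.range k).map (fun n => (c (fm n), m (fm n))) with hL
  have hvL : BergeGirth.Valid g r s L := by
    refine ⟨?_, ?_, ?_⟩
    · rw [hL]; simp; omega
    · rw [hL]; simp only [List.Chain']; rw [List.isChain_iff_getElem]
      intro i hlen
      simp only [List.length_map, List.length_range] at hlen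
      have hi1 : i + 1 < k := by omega
      have hi : i < k := by omega
      have hget : ∀ (n : ℕ) (hn : n < k), ((List.range k).map
          (fun n => (c (fm n), m (fm n))))[n]'(by simp [hn]) = (c (fm n), m (fm n)) := by
        intro n hn
        simp
      rw [hget i hi, hget (i + 1) hi1]
      show c (fm i) ≠ c (fm (i + 1))
      have h := hcol (fm i)
      rw [hfmrot i] at h
      exact h.symm
    · intro p hp
      rw [hL] at hp
      simp only [List.mem_map, List.mem_range] at hp
      obtain ⟨n, _, rfl⟩ := hp
      exact ⟨hm1 _, hm2 _⟩
  have hword : P k = (L.map (fun p => BergeGirth.sigma g r s hs p.1 ^ p.2)).prod := by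
    rw [hL, hP, List.map_map]
    rfl
  have heval := BergeGirth.word_eval g r s hs hg L hvL
  rw [← hword, hP1] at heval
  have hLnil : L = [] := by
    have h1 : BergeGirth.eps g r s = (⟨L, hvL⟩ : BergeGirth.X g r s) := heval
    have h2 := congrArg Subtype.val h1
    exact h2.symm
  rw [hL] at hLnil
  simp only [List.map_eq_nil_iff, List.range_eq_nil] at hLnil
  omega
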